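/- arXiv:1802.05668 — 2 statements merged into one kernel-verified Lean document; each statement's English description precedes it below -/
import Mathlib

section
/- The scaled stochastic uniform quantization function is unbiased: for every vector v ∈ ℝ^n whose coordinates are not all equal, E[Q(v)] = v, i.e. E[Q(v)_i] = v_i for every coordinate i. -/
open MeasureTheory ProbabilityTheory

/-- The law of a real-valued Bernoulli random variable with success probability `p`. -/
noncomputable def bernoulliLaw (p : ℝ) : Measure ℝ :=
  ENNReal.ofReal (1 - p) • Measure.dirac 0 + ENNReal.ofReal p • Measure.dirac 1

/-- The success probability `k = s·x − ⌊x·s⌋` used in stochastic uniform quantization. -/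
noncomputable def quantProb (s : ℕ) (x : ℝ) : ℝ := (s : ℝ) * x - (⌊x * (s : ℝ)⌋ : ℝ)

/-- One coordinate of the stochastic uniform quantization with `s+1` levels:
`Q̂(x) = ⌊x·s⌋/s + ξ/s`, where `ξ` is the Bernoulli noise. -/
noncomputable def qhat (s : ℕ) (x ξ : ℝ) : ℝ := (⌊x * (s : ℝ)⌋ : ℝ) / s + ξ / s

lemma integrable_id_dirac (a : ℝ) : Integrable (id : ℝ → ℝ) (Measure.dirac a) :=
  (integrable_const a).congr (ae_eq_dirac (id : ℝ → ℝ)).symm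

lemma bernoulliLaw_integral_id (p : ℝ) (hp : 0 ≤ p) : ∫ y, id y ∂(bernoulliLaw p) = p := by
  unfold bernoulliLaw
  rw [integral_add_measure ((integrable_id_dirac 0).smul_measure ENNReal.ofReal_ne_top)
      ((integrable_id_dirac 1).smul_measure ENNReal.ofReal_ne_top),
    integral_smul_measure, integral_smul_measure, integral_dirac, integral_dirac,
    ENNReal.toReal_ofReal hp]
  simp

lemma bernoulliLaw_integrable_id (p : ℝ) : Integrable (id : ℝ → ℝ) (bernoulliLaw p) :=
  ((integrable_id_dirac 0).smul_measure ENNReal.ofReal_ne_top).add_measure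
    ((integrable_id_dirac 1).smul_measure ENNReal.ofReal_ne_top)

lemma quantProb_nonneg (s : ℕ) (x : ℝ) : 0 ≤ quantProb s x := by
  have := Int.floor_le (x * s)
  unfold quantProb
  nlinarith [this]

/-- The scaled stochastic uniform quantization `Q(v) = α·Q̂((v−β)/α) + β` with
`β = min_i v_i` and `α = max_i v_i − min_i v_i` is unbiased: `E[Q(v)_i] = v_i`. -/
theorem scaled_stochastic_quantization_unbiased
    {Ω : Type*} [MeasurableSpace Ω] (μ : Measure Ω) [IsProbabilityMeasure μ]
    {n : ℕ} (s : ℕ) (hs : 1 ≤ s)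
    (v : Fin n → ℝ) (hne : ∃ i j, v i ≠ v j)
    (β α : ℝ) (hβ : β = ⨅ i, v i) (hα : α = (⨆ i, v i) - ⨅ i, v i)
    (ξ : Fin n → Ω → ℝ) (hmeas : ∀ i, Measurable (ξ i))
    (hlaw : ∀ i, μ.map (ξ i) = bernoulliLaw (quantProb s ((v i - β) / α)))
    (i : Fin n) :
    ∫ ω, (α * qhat s ((v i - β) / α) (ξ i ω) + β) ∂μ = v i := by
  obtain ⟨j, k, hjk⟩ := hne
  haveI : Nonempty (Fin n) := ⟨j⟩
  -- α ≠ 0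
  have hbdd : BddAbove (Set.range v) := (Set.finite_range v).bddAbove
  have hbddb : BddBelow (Set.range v) := (Set.finite_range v).bddBelow
  have hαpos : 0 < α := by
    rw [hα, sub_pos]
    rcases lt_or_ge (⨅ m, v m) (⨆ m, v m) with h | h
    · exact h
    · exfalso
      have heq : ∀ m, v m = ⨅ m, v m := fun m =>
        le_antisymm ((le_ciSup hbdd m).trans h) (ciInf_le hbddb m)
      exact hjk ((heq j).trans (heq k).symm)
  have hα0 : α ≠ 0 := ne_of_gt hαpos
  set x := (v i - β) / α with hx
  set p := quantProb s x with hp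
  set c := (⌊x * (s : ℝ)⌋ : ℝ) with hc
  -- expectation of ξ i
  have hEξ : ∫ ω, ξ i ω ∂μ = p := by
    have h1 : ∫ y, id y ∂(μ.map (ξ i)) = ∫ ω, id (ξ i ω) ∂μ :=
      integral_map (hmeas i).aemeasurable aestronglyMeasurable_id
    rw [hlaw i, bernoulliLaw_integral_id p (quantProb_nonneg s x)] at h1
    exact h1.symm
  have hint : Integrable (ξ i) μ := by
    have h2 := integrable_map_measure (μ := μ) (f := ξ i) (g := (id : ℝ → ℝ))
      aestronglyMeasurable_id (hmeas i).aemeasurable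
    rw [hlaw i] at h2
    exact h2.mp (bernoulliLaw_integrable_id p)
  have hss : (s : ℝ) ≠ 0 := by positivity
  have hrw : ∀ ω, α * qhat s x (ξ i ω) + β = (α / s) * ξ i ω + (α * c / s + β) := by
    intro ω; unfold qhat; field_simp; ring
  calc ∫ ω, (α * qhat s x (ξ i ω) + β) ∂μ
      = ∫ ω, ((α / s) * ξ i ω + (α * c / s + β)) ∂μ := by
        exact integral_congr_ae (Filter.Eventually.of_forall hrw)
    _ = (α / s) * p + (α * c / s + β) := by
        rw [integral_add (hint.const_mul _) (integrable_const _),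
          integral_const_mul, hEξ, integral_const, probReal_univ]
        simp
    _ = α * x + β := by
        have : p = s * x - c := rfl
        rw [this]; field_simp; ring
    _ = v i := by rw [hx]; field_simp; ring
end

section
/- Verification of the Lyapunov condition for quantized scalar products: let (v_i)_{i≥1} and (x_i)_{i≥1} be real sequences with |v_i| ≤ M, |x_i| ≤ M and scaling factors α_i ≤ M for all i, let Q be the scaled stochastic uniform quantization with s+1 levels, set X_i = Q(v)_i x_i, μ_i = v_i x_i, and s_n² = Σ_{i=1}^n Var[X_i]. If s_n → ∞ as n → ∞, then (1/s_n³)·Σ_{i=1}^n E[|X_i − μ_i|³] ≤ (M²/s)·(1/s_n) for every n, and hence lim_{n→∞} (1/s_n³)·Σ_{i=1}^n E[|X_i − μ_i|³] = 0. -/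
open MeasureTheory ProbabilityTheory Filter

lemma integrable_bern_part (c : ENNReal) (hc : c ≠ ⊤) (a : ℝ) (f : ℝ → ℝ) :
    Integrable f (c • Measure.dirac a) :=
  ((integrable_const (f a)).congr (ae_eq_dirac f).symm).smul_measure hc

lemma bern_integral {p : ℝ} (hp0 : 0 ≤ p) (hp1 : p ≤ 1) (f : ℝ → ℝ) :
    ∫ t, f t ∂(bernoulliLaw p) = (1 - p) * f 0 + p * f 1 := by
  rw [bernoulliLaw,
    integral_add_measure (integrable_bern_part _ ENNReal.ofReal_ne_top _ f)
      (integrable_bern_part _ ENNReal.ofReal_ne_top _ f),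
    integral_smul_measure, integral_smul_measure, integral_dirac, integral_dirac,
    ENNReal.toReal_ofReal (by linarith), ENNReal.toReal_ofReal hp0]
  simp [smul_eq_mul]

lemma bern_ae {p : ℝ} : ∀ᵐ t ∂(bernoulliLaw p), t ∈ ({0, 1} : Set ℝ) := by
  rw [ae_iff]
  have h0 : Measure.dirac (0:ℝ) {t : ℝ | ¬t ∈ ({0,1} : Set ℝ)} = 0 := by
    have : {t : ℝ | ¬t ∈ ({0,1} : Set ℝ)} = ({0,1} : Set ℝ)ᶜ := rfl
    rw [this, Measure.dirac_apply' _ (((measurableSet_singleton (1:ℝ)).insert 0).compl)]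
    simp
  have h1 : Measure.dirac (1:ℝ) {t : ℝ | ¬t ∈ ({0,1} : Set ℝ)} = 0 := by
    have : {t : ℝ | ¬t ∈ ({0,1} : Set ℝ)} = ({0,1} : Set ℝ)ᶜ := rfl
    rw [this, Measure.dirac_apply' _ (((measurableSet_singleton (1:ℝ)).insert 0).compl)]
    simp
  simp [bernoulliLaw, Measure.add_apply, Measure.smul_apply, h0, h1]

/-- Verification of the Lyapunov condition for quantized scalar products: with
`X_i = Q(v)_i·x_i`, `μ_i = v_i·x_i`, `s_n² = Σ_{i<n} Var[X_i]`, and all quantities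
bounded by `M`, if `s_n → ∞` then
`(1/s_n³)·Σ_{i<n} E[|X_i − μ_i|³] ≤ (M²/s)·(1/s_n)` for every `n`, and the
left-hand side tends to `0`. -/
theorem quantized_scalar_product_lyapunov_condition
    {Ω : Type*} [MeasurableSpace Ω] (μ : Measure Ω) [IsProbabilityMeasure μ]
    (s : ℕ) (hs : 1 ≤ s) (M : ℝ)
    (v x α β : ℕ → ℝ)
    (hα : ∀ i, 0 < α i) (hscaled : ∀ i, (v i - β i) / α i ∈ Set.Icc (0 : ℝ) 1)
    (hv : ∀ i, |v i| ≤ M) (hx : ∀ i, |x i| ≤ M) (hαM : ∀ i, α i ≤ M)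
    (ξ : ℕ → Ω → ℝ) (hmeas : ∀ i, Measurable (ξ i))
    (hind : iIndepFun ξ μ)
    (hlaw : ∀ i, μ.map (ξ i) = bernoulliLaw (quantProb s ((v i - β i) / α i)))
    (X : ℕ → Ω → ℝ)
    (hX : ∀ i ω, X i ω = (α i * qhat s ((v i - β i) / α i) (ξ i ω) + β i) * x i)
    (sn : ℕ → ℝ)
    (hsn : ∀ n, sn n = Real.sqrt (∑ i ∈ Finset.range n, variance (X i) μ))
    (htend : Tendsto sn atTop atTop) :
    (∀ n, (1 / (sn n) ^ 3) * ∑ i ∈ Finset.range n, ∫ ω, |X i ω - v i * x i| ^ 3 ∂μ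
        ≤ (M ^ 2 / s) * (1 / sn n)) ∧
    Tendsto
      (fun n => (1 / (sn n) ^ 3) * ∑ i ∈ Finset.range n, ∫ ω, |X i ω - v i * x i| ^ 3 ∂μ)
      atTop (nhds 0) := by
  have hM0 : (0:ℝ) ≤ M := le_trans (abs_nonneg _) (hv 0)
  have hs0 : (0:ℝ) < s := by exact_mod_cast Nat.lt_of_lt_of_le Nat.zero_lt_one hs
  have key : ∀ i, (0 ≤ ∫ ω, |X i ω - v i * x i| ^ 3 ∂μ) ∧
      ∫ ω, |X i ω - v i * x i| ^ 3 ∂μ ≤ (M ^ 2 / s) * variance (X i) μ := by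
    intro i
    set p := quantProb s ((v i - β i) / α i) with hp
    have hpf : p = Int.fract (((v i - β i) / α i) * s) := by
      rw [hp]; unfold quantProb Int.fract; ring
    have hp0 : 0 ≤ p := hpf ▸ Int.fract_nonneg _
    have hp1 : p ≤ 1 := hpf ▸ le_of_lt (Int.fract_lt_one _)
    set a : ℝ := (α i * ((⌊((v i - β i) / α i) * s⌋ : ℝ) / s) + β i) * x i with ha
    set c : ℝ := α i * x i / s with hc
    have hXa : ∀ ω, X i ω = a + c * ξ i ω := by
      intro ω; rw [hX i ω, qhat, ha, hc]; ring
    have hm : v i * x i = a + c * p := by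
      rw [ha, hc, hp]; unfold quantProb
      have hα' : α i ≠ 0 := (hα i).ne'
      field_simp
      ring
    have hXmeas : Measurable (X i) := by
      have : X i = fun ω => a + c * ξ i ω := funext hXa
      rw [this]; exact measurable_const.add ((hmeas i).const_mul c)
    have E_f : ∀ f : ℝ → ℝ, Measurable f →
        ∫ ω, f (ξ i ω) ∂μ = (1 - p) * f 0 + p * f 1 := by
      intro f hf
      rw [← integral_map (hmeas i).aemeasurable hf.aestronglyMeasurable, hlaw i, ← hp,
        bern_integral hp0 hp1]
    have haeξ : ∀ᵐ ω ∂μ, ξ i ω ∈ ({0, 1} : Set ℝ) := by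
      have hset : MeasurableSet {t : ℝ | t ∈ ({0,1} : Set ℝ)} :=
        (measurableSet_singleton (1:ℝ)).insert 0
      refine (ae_map_iff (hmeas i).aemeasurable hset).mp ?_
      rw [hlaw i]; exact bern_ae
    have hmemX : MemLp (X i) 2 μ := by
      refine MemLp.of_bound hXmeas.aestronglyMeasurable (|a| + |c|) ?_
      filter_upwards [haeξ] with ω hω
      rw [Real.norm_eq_abs, hXa ω]
      rcases hω with h | h
      · rw [h]; simp [abs_nonneg]
      · simp only [Set.mem_singleton_iff] at h
        rw [h, mul_one]
        exact le_trans (abs_add_le a c) le_rfl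
    have hEX : ∫ ω, X i ω ∂μ = a + c * p := by
      calc ∫ ω, X i ω ∂μ = ∫ ω, (fun t => a + c * t) (ξ i ω) ∂μ :=
            integral_congr_ae (Eventually.of_forall fun ω => hXa ω)
        _ = (1 - p) * (a + c * 0) + p * (a + c * 1) :=
            E_f _ (measurable_const.add (measurable_id.const_mul c))
        _ = a + c * p := by ring
    have hEX2 : ∫ ω, (X i ω) ^ 2 ∂μ = (1 - p) * (a + c * 0) ^ 2 + p * (a + c * 1) ^ 2 := by
      calc ∫ ω, (X i ω) ^ 2 ∂μ = ∫ ω, (fun t => (a + c * t) ^ 2) (ξ i ω) ∂μ :=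
            integral_congr_ae (Eventually.of_forall fun ω => by simp only [hXa])
        _ = (1 - p) * (a + c * 0) ^ 2 + p * (a + c * 1) ^ 2 :=
            E_f _ (((measurable_const.add (measurable_id.const_mul c)).pow_const 2))
    have hvar : variance (X i) μ = c ^ 2 * (p * (1 - p)) := by
      rw [variance_eq_sub hmemX]
      have h2 : μ[X i ^ 2] = ∫ ω, (X i ω) ^ 2 ∂μ := by simp [Pi.pow_apply]
      rw [h2, hEX2, hEX]
      ring
    have hE3 : ∫ ω, |X i ω - v i * x i| ^ 3 ∂μ
        = (1 - p) * |a + c * 0 - v i * x i| ^ 3 + p * |a + c * 1 - v i * x i| ^ 3 := by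
      calc ∫ ω, |X i ω - v i * x i| ^ 3 ∂μ
          = ∫ ω, (fun t => |a + c * t - v i * x i| ^ 3) (ξ i ω) ∂μ :=
            integral_congr_ae (Eventually.of_forall fun ω => by simp only [hXa])
        _ = _ := E_f _
            (((measurable_const.add (measurable_id.const_mul c)).sub
              measurable_const).abs.pow_const 3)
    constructor
    · exact integral_nonneg fun ω => pow_nonneg (abs_nonneg _) 3
    · rw [hE3, hvar, hm]
      have e0 : |a + c * 0 - (a + c * p)| = |c| * p := by
        rw [show a + c * 0 - (a + c * p) = -(c * p) by ring, abs_neg, abs_mul, abs_of_nonneg hp0]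
      have e1 : |a + c * 1 - (a + c * p)| = |c| * (1 - p) := by
        rw [show a + c * 1 - (a + c * p) = c * (1 - p) by ring, abs_mul,
          abs_of_nonneg (by linarith : (0:ℝ) ≤ 1 - p)]
      rw [e0, e1]
      have hcle : |c| ≤ M ^ 2 / s := by
        rw [hc, abs_div, abs_mul, abs_of_pos hs0]
        gcongr
        calc |α i| * |x i| ≤ M * M := by
              apply mul_le_mul _ (hx i) (abs_nonneg _) hM0
              rw [abs_of_pos (hα i)]; exact hαM i
          _ = M ^ 2 := by ring
      have h1p : (0:ℝ) ≤ 1 - p := by linarith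
      have hc2 : |c| ^ 2 = c ^ 2 := sq_abs c
      have step1 : (1 - p) * (|c| * p) ^ 3 + p * (|c| * (1 - p)) ^ 3
          = |c| ^ 3 * ((1 - p) * p ^ 3 + p * (1 - p) ^ 3) := by ring
      have step2 : (1 - p) * p ^ 3 + p * (1 - p) ^ 3 ≤ p * (1 - p) := by
        nlinarith [sq_nonneg (p * (1 - p))]
      have step3 : |c| ^ 3 * ((1 - p) * p ^ 3 + p * (1 - p) ^ 3)
          ≤ |c| ^ 3 * (p * (1 - p)) :=
        mul_le_mul_of_nonneg_left step2 (by positivity)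
      have step4 : |c| ^ 3 * (p * (1 - p)) = |c| * (c ^ 2 * (p * (1 - p))) := by
        rw [← hc2]; ring
      have step5 : |c| * (c ^ 2 * (p * (1 - p))) ≤ (M ^ 2 / s) * (c ^ 2 * (p * (1 - p))) :=
        mul_le_mul_of_nonneg_right hcle
          (mul_nonneg (sq_nonneg c) (mul_nonneg hp0 h1p))
      linarith
  have hsum : ∀ n, ∑ i ∈ Finset.range n, (∫ ω, |X i ω - v i * x i| ^ 3 ∂μ)
      ≤ (M ^ 2 / s) * (sn n) ^ 2 := by
    intro n
    have h2 : (sn n) ^ 2 = ∑ i ∈ Finset.range n, variance (X i) μ := by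
      rw [hsn n, Real.sq_sqrt (Finset.sum_nonneg fun i _ => variance_nonneg _ _)]
    rw [h2, Finset.mul_sum]
    exact Finset.sum_le_sum fun i _ => (key i).2
  have hpart1 : ∀ n, (1 / (sn n) ^ 3) * ∑ i ∈ Finset.range n,
      (∫ ω, |X i ω - v i * x i| ^ 3 ∂μ) ≤ (M ^ 2 / s) * (1 / sn n) := by
    intro n
    have hsn0 : 0 ≤ sn n := (hsn n) ▸ Real.sqrt_nonneg _
    rcases eq_or_lt_of_le hsn0 with h | h
    · have hsum0 : ∑ i ∈ Finset.range n, (∫ ω, |X i ω - v i * x i| ^ 3 ∂μ) = 0 := by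
        refine le_antisymm (le_trans (hsum n) ?_) (Finset.sum_nonneg fun i _ => (key i).1)
        rw [← h]; norm_num
      rw [hsum0, mul_zero, ← h]
      norm_num
    · have hle := mul_le_mul_of_nonneg_left (hsum n)
        (le_of_lt (by positivity : (0:ℝ) < 1 / (sn n) ^ 3))
      refine le_trans hle (le_of_eq ?_)
      field_simp
  have hnonneg : ∀ n, 0 ≤ (1 / (sn n) ^ 3) * ∑ i ∈ Finset.range n,
      (∫ ω, |X i ω - v i * x i| ^ 3 ∂μ) := by
    intro n
    have hsn0 : 0 ≤ sn n := (hsn n) ▸ Real.sqrt_nonneg _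
    exact mul_nonneg (one_div_nonneg.mpr (pow_nonneg hsn0 3))
      (Finset.sum_nonneg fun i _ => (key i).1)
  refine ⟨hpart1, ?_⟩
  have hub : Tendsto (fun n => (M ^ 2 / s) * (1 / sn n)) atTop (nhds 0) := by
    have h1 : Tendsto (fun n => (sn n)⁻¹) atTop (nhds 0) := htend.inv_tendsto_atTop
    have := h1.const_mul (M ^ 2 / (s:ℝ))
    simpa [one_div] using this
  exact squeeze_zero hnonneg hpart1 hub
end
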